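/- arXiv:math/0405602 — 3 statements merged into one kernel-verified Lean document; each statement's English description precedes it below -/
import Mathlib

section
/- Let λ, m, m̃, R̃, Q̃ be real numbers with 1 < λ, λ⁴ < 1/(√2 − 1/2), m > 0, m̃ ≤ 2λm, 0 < R̃ ≤ √2·λ·m, and Q̃ ≥ 2m/λ. Then m̃ − (1/2)(R̃ + Q̃²/R̃) < 0. -/
theorem glued_data_violates_charged_penrose
    (lam m mTilde RTilde QTilde : ℝ)
    (hlam : 1 < lam) (hlam4 : lam ^ 4 < 1 / (Real.sqrt 2 - 1 / 2))
    (hm : 0 < m)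
    (hmTilde : mTilde ≤ 2 * lam * m)
    (hRTilde_pos : 0 < RTilde) (hRTilde : RTilde ≤ Real.sqrt 2 * lam * m)
    (hQTilde : QTilde ≥ 2 * m / lam) :
    mTilde - (1 / 2) * (RTilde + QTilde ^ 2 / RTilde) < 0 := by
  set s := Real.sqrt 2 with hs
  have hs2 : s ^ 2 = 2 := Real.sq_sqrt (by norm_num)
  have hs1 : 1 < s := by
    nlinarith [Real.sqrt_nonneg 2]
  have hslt2 : s < 2 := by nlinarith [Real.sqrt_nonneg 2]
  have hd : 0 < s - 1 / 2 := by linarith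
  have hA : lam ^ 4 * (s - 1 / 2) < 1 := (lt_div_iff₀ hd).mp hlam4
  have hlam0 : (0:ℝ) < lam := by linarith
  have hQl : 2 * m ≤ QTilde * lam := (div_le_iff₀ hlam0).mp hQTilde
  have hQsq : 4 * m ^ 2 ≤ QTilde ^ 2 * lam ^ 2 := by
    nlinarith [mul_le_mul hQl hQl (by positivity) (by linarith : (0:ℝ) ≤ QTilde * lam)]
  have hQ2 : (4 * s - 2) * lam ^ 2 * m ^ 2 < QTilde ^ 2 := by
    nlinarith [mul_pos hm hm, (show (0:ℝ) < lam ^ 2 by positivity), hA, hQsq]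
  have hfac : 0 ≤ (s * lam * m - RTilde) * (4 * lam * m - s * lam * m - RTilde) := by
    apply mul_nonneg (by linarith)
    nlinarith [mul_pos hlam0 hm]
  have key : (2 * mTilde - RTilde) * RTilde < QTilde ^ 2 := by
    nlinarith [mul_le_mul_of_nonneg_right hmTilde hRTilde_pos.le, hfac, hQ2, hs2]
  have hdiv : 2 * mTilde - RTilde < QTilde ^ 2 / RTilde :=
    (lt_div_iff₀ hRTilde_pos).mpr key
  linarith
end

section
/- Let m and T be real numbers with 0 < m ≤ 1 and T > 2, and define ψ : (0,∞) → ℝ by ψ(r) = −e^{−T} ∫_{e^{−T}}^{r} (log s)/(s(s+m)) ds. Then for every r > e^{−T}, 0 < ψ(r) ≤ T² e^{−T}/(2m). -/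
open Real intervalIntegral Set

lemma intInt_log_div (p : ℝ → ℝ) (hp : Continuous p) (hpne : ∀ s, 0 < s → p s ≠ 0)
    {x y : ℝ} (hx : 0 < x) (hxy : x ≤ y) :
    IntervalIntegrable (fun s => Real.log s / p s) MeasureTheory.volume x y := by
  apply ContinuousOn.intervalIntegrable
  have hsub : Set.uIcc x y ⊆ Set.Ioi 0 := by
    rw [Set.uIcc_of_le hxy]; intro s hs; exact lt_of_lt_of_le hx hs.1
  exact ContinuousOn.div
    (Real.continuousOn_log.mono (fun s hs => ne_of_gt (hsub hs)))
    hp.continuousOn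
    (fun s hs => hpne s (hsub hs))

lemma integral_log_div_id {c x y : ℝ} (hc : c ≠ 0) (hx : 0 < x) (hxy : x ≤ y) :
    ∫ s in x..y, Real.log s / (c * s) = ((Real.log y)^2 - (Real.log x)^2) / (2*c) := by
  have h : ∀ s ∈ Set.uIcc x y,
      HasDerivAt (fun t => (Real.log t)^2/(2*c)) (Real.log s / (c*s)) s := by
    intro s hs
    rw [Set.uIcc_of_le hxy] at hs
    have hs0 : 0 < s := lt_of_lt_of_le hx hs.1
    have h1 := ((Real.hasDerivAt_log hs0.ne').pow 2).div_const (2*c)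
    refine h1.congr_deriv ?_
    field_simp
    ring
  rw [intervalIntegral.integral_eq_sub_of_hasDerivAt h
    (intInt_log_div (fun s => c * s) (by continuity)
      (fun s hs => by positivity) hx hxy)]
  ring

lemma integral_log_div_sq {r : ℝ} (hr : 1 ≤ r) :
    ∫ s in (1:ℝ)..r, Real.log s / s^2 = 1 - (Real.log r + 1)/r := by
  have h : ∀ s ∈ Set.uIcc (1:ℝ) r,
      HasDerivAt (fun t => -((Real.log t + 1)/t)) (Real.log s / s^2) s := by
    intro s hs
    rw [Set.uIcc_of_le hr] at hs
    have hs0 : 0 < s := lt_of_lt_of_le one_pos hs.1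
    have h1 := ((((Real.hasDerivAt_log hs0.ne').add_const 1)).div
      (hasDerivAt_id s) hs0.ne').neg
    refine h1.congr_deriv ?_
    simp only [id]
    field_simp
    ring
  rw [intervalIntegral.integral_eq_sub_of_hasDerivAt h
    (intInt_log_div (fun s => s^2) (by continuity)
      (fun s hs => by positivity) one_pos hr)]
  simp only [Real.log_one]
  norm_num
  ring

theorem psi_positive_and_bounded (m T : ℝ) (hm : 0 < m) (hm1 : m ≤ 1) (hT : 2 < T)
    (ψ : ℝ → ℝ)
    (hψ : ∀ r : ℝ, ψ r =
      -Real.exp (-T) * ∫ s in Real.exp (-T)..r, Real.log s / (s * (s + m))) :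
    ∀ r : ℝ, Real.exp (-T) < r →
      0 < ψ r ∧ ψ r ≤ T ^ 2 * Real.exp (-T) / (2 * m) := by
  intro r hr
  set a := Real.exp (-T) with ha
  have ha0 : 0 < a := Real.exp_pos _
  have hloga : Real.log a = -T := Real.log_exp _
  have ha1 : a < 1 := by
    rw [ha, Real.exp_lt_one_iff]; linarith
  have hr0 : 0 < r := ha0.trans hr
  set f : ℝ → ℝ := fun s => Real.log s / (s * (s + m)) with hf
  have hfint : ∀ x y : ℝ, 0 < x → x ≤ y → IntervalIntegrable f MeasureTheory.volume x y :=
    fun x y hx hxy => intInt_log_div _ (by continuity) (fun s hs => by positivity) hx hxy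
  set I : ℝ := ∫ s in a..r, f s with hI
  -- upper comparison on any [x,y] ⊆ (0,1]
  have hub : ∀ x y : ℝ, 0 < x → x ≤ y → y ≤ 1 →
      -(∫ s in x..y, f s) ≤ ((Real.log x)^2 - (Real.log y)^2) / (2*m) := by
    intro x y hx hxy hy1
    have hmono : (∫ s in x..y, (fun s => -(f s)) s) ≤
        ∫ s in x..y, -(Real.log s / (m * s)) := by
      apply intervalIntegral.integral_mono_on hxy (hfint x y hx hxy).neg
        ((intInt_log_div (fun s => m*s) (by continuity)
          (fun s hs => by positivity) hx hxy).neg)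
      intro s hs
      have hs0 : 0 < s := lt_of_lt_of_le hx hs.1
      have hs1 : s ≤ 1 := le_trans hs.2 hy1
      have hlog : 0 ≤ -Real.log s := by
        have := Real.log_nonpos hs0.le hs1; linarith
      have h1 : (-Real.log s) / (s * (s + m)) ≤ (-Real.log s) / (m * s) := by
        rw [div_le_div_iff₀ (by positivity) (by positivity)]
        nlinarith [mul_le_mul_of_nonneg_left (show m*s ≤ s*(s+m) by nlinarith) hlog]
      simpa [hf, neg_div] using h1
    rw [intervalIntegral.integral_neg, intervalIntegral.integral_neg,
      integral_log_div_id hm.ne' hx hxy] at hmono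
    have heq : -((Real.log y ^ 2 - Real.log x ^ 2) / (2*m))
        = ((Real.log x)^2 - (Real.log y)^2) / (2*m) := by ring
    linarith [heq ▸ hmono]
  -- lower comparison on [a,1]
  have hlb : T^2/4 ≤ -(∫ s in a..(1:ℝ), f s) := by
    have hmono : (∫ s in a..(1:ℝ), -(Real.log s / (2 * s))) ≤
        ∫ s in a..(1:ℝ), (fun s => -(f s)) s := by
      apply intervalIntegral.integral_mono_on ha1.le
        ((intInt_log_div (fun s => 2*s) (by continuity)
          (fun s hs => by positivity) ha0 ha1.le).neg)
        (hfint a 1 ha0 ha1.le).neg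
      intro s hs
      have hs0 : 0 < s := lt_of_lt_of_le ha0 hs.1
      have hs1 : s ≤ 1 := hs.2
      have hlog : 0 ≤ -Real.log s := by
        have := Real.log_nonpos hs0.le hs1; linarith
      have h1 : (-Real.log s) / (2 * s) ≤ (-Real.log s) / (s * (s + m)) := by
        rw [div_le_div_iff₀ (by positivity) (by positivity)]
        nlinarith [mul_le_mul_of_nonneg_left (show s*(s+m) ≤ 2*s by nlinarith) hlog]
      simpa [hf, neg_div] using h1
    rw [intervalIntegral.integral_neg, intervalIntegral.integral_neg,
      integral_log_div_id two_ne_zero ha0 ha1.le, hloga, Real.log_one] at hmono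
    have heq : -((0 ^ 2 - (-T) ^ 2) / (2*2)) = T^2/4 := by ring
    linarith [heq ▸ hmono]
  -- key bounds on I
  have key : I < 0 ∧ -(T^2/(2*m)) ≤ I := by
    rcases le_or_gt r 1 with hr1 | hr1
    · constructor
      · have hpos : 0 < ∫ s in a..r, (fun s => -(f s)) s := by
          apply intervalIntegral.intervalIntegral_pos_of_pos_on
            (hfint a r ha0 hr.le).neg _ hr
          intro s hs
          have hs0 : 0 < s := ha0.trans hs.1
          have hs1 : s < 1 := lt_of_lt_of_le hs.2 hr1
          have hlog : Real.log s < 0 := Real.log_neg hs0 hs1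
          have : 0 < (-Real.log s) / (s * (s + m)) :=
            div_pos (by linarith) (by positivity)
          simpa [hf, neg_div] using this
        rw [intervalIntegral.integral_neg] at hpos
        rw [hI]; linarith
      · have h1 := hub a r ha0 hr.le hr1
        rw [hloga] at h1
        have hsq : 0 ≤ (Real.log r)^2 := sq_nonneg _
        have h2 : ((-T)^2 - (Real.log r)^2)/(2*m) ≤ T^2/(2*m) := by
          apply div_le_div_of_nonneg_right ?_ (by positivity)
          nlinarith
        rw [hI]; linarith
    · -- r > 1 : split the integral
      have hsplit : I = (∫ s in a..(1:ℝ), f s) + ∫ s in (1:ℝ)..r, f s := by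
        rw [hI, ← intervalIntegral.integral_add_adjacent_intervals
          (hfint a 1 ha0 ha1.le) (hfint 1 r one_pos hr1.le)]
      have hBnonneg : 0 ≤ ∫ s in (1:ℝ)..r, f s := by
        apply intervalIntegral.integral_nonneg hr1.le
        intro s hs
        have hs1 : 1 ≤ s := hs.1
        have hs0 : 0 < s := lt_of_lt_of_le one_pos hs1
        have hlog : 0 ≤ Real.log s := Real.log_nonneg hs1
        rw [hf]
        positivity
      have hBle : (∫ s in (1:ℝ)..r, f s) ≤ 1 := by
        have hmono : (∫ s in (1:ℝ)..r, f s) ≤ ∫ s in (1:ℝ)..r, Real.log s / s^2 := by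
          apply intervalIntegral.integral_mono_on hr1.le (hfint 1 r one_pos hr1.le)
            (intInt_log_div (fun s => s^2) (by continuity)
              (fun s hs => by positivity) one_pos hr1.le)
          intro s hs
          have hs1 : 1 ≤ s := hs.1
          have hs0 : 0 < s := lt_of_lt_of_le one_pos hs1
          have hlog : 0 ≤ Real.log s := Real.log_nonneg hs1
          have h1 : Real.log s / (s * (s + m)) ≤ Real.log s / s^2 := by
            rw [div_le_div_iff₀ (by positivity) (by positivity)]
            nlinarith [mul_le_mul_of_nonneg_left (show s^2 ≤ s*(s+m) by nlinarith) hlog]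
          simpa [hf] using h1
        rw [integral_log_div_sq hr1.le] at hmono
        have : 0 ≤ (Real.log r + 1)/r := by
          have := Real.log_nonneg hr1.le
          positivity
        linarith
      have hAub : -(∫ s in a..(1:ℝ), f s) ≤ T^2/(2*m) := by
        have h1 := hub a 1 ha0 ha1.le le_rfl
        rw [hloga, Real.log_one] at h1
        have heq : ((-T)^2 - (0:ℝ)^2)/(2*m) = T^2/(2*m) := by ring
        linarith [heq ▸ h1]
      constructor
      · have hT4 : (4:ℝ) < T^2 := by nlinarith
        rw [hsplit]
        linarith
      · rw [hsplit]
        linarith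
  -- conclude
  obtain ⟨hIneg, hIge⟩ := key
  have hψr : ψ r = -a * I := by rw [hψ r, hI]
  rw [hψr]
  constructor
  · have hnI : 0 < -I := by linarith
    calc (0:ℝ) < a * (-I) := mul_pos ha0 hnI
      _ = -a * I := by ring
  · have h1 : -I ≤ T^2/(2*m) := by linarith
    have h2 := mul_le_mul_of_nonneg_left h1 ha0.le
    calc -a * I = a * (-I) := by ring
      _ ≤ a * (T^2/(2*m)) := h2
      _ = T^2 * a / (2*m) := by ring
end

section
/- Fix m > 0 and let p₁ = (0,0,1), p₂ = (0,0,−1) ∈ ℝ³, and for x ∈ ℝ³ ∖ {p₁, p₂} set u(x)² = 1 + m/‖x − p₁‖ + m/‖x − p₂‖. Then for every x ∈ ℝ³ with ‖x‖ ≥ 3, ‖∇(u²)(x)‖ / (2 u(x)⁴) ≤ 3m/(4‖x‖), where ∇ is the Euclidean gradient and u⁴ = (u²)². -/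
open Real

variable {E : Type*} [NormedAddCommGroup E] [InnerProductSpace ℝ E] [CompleteSpace E]

lemma hasGradientAt_inv_norm_sub (p x : E) (h : x ≠ p) :
    HasGradientAt (fun y => ‖y - p‖⁻¹) ((-(‖x - p‖ ^ 3)⁻¹) • (x - p)) x := by
  have hxp : x - p ≠ 0 := sub_ne_zero.mpr h
  have ht : (0:ℝ) < ‖x - p‖ := norm_pos_iff.mpr hxp
  have h1 : HasFDerivAt (fun y : E => ‖y - p‖ ^ 2)
      (2 • (innerSL ℝ (x - p)).comp (ContinuousLinearMap.id ℝ E)) x := by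
    simpa using ((hasFDerivAt_id x).sub_const p).norm_sq
  have hs : Real.sqrt (‖x - p‖ ^ 2) = ‖x - p‖ := Real.sqrt_sq ht.le
  have h2 : HasDerivAt (fun t : ℝ => (Real.sqrt t)⁻¹)
      (-(1 / (2 * Real.sqrt (‖x - p‖ ^ 2))) / (Real.sqrt (‖x - p‖ ^ 2)) ^ 2)
      (‖x - p‖ ^ 2) := by
    refine (Real.hasDerivAt_sqrt (by positivity)).inv ?_
    rw [hs]; exact ht.ne'
  have h3 := h2.comp_hasFDerivAt x h1
  have hfun : (fun y : E => (Real.sqrt (‖y - p‖ ^ 2))⁻¹) = fun y => ‖y - p‖⁻¹ := by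
    funext y; rw [Real.sqrt_sq (norm_nonneg _)]
  simp only [Function.comp_def] at h3
  rw [hfun] at h3
  rw [hasGradientAt_iff_hasFDerivAt]
  refine h3.congr_fderiv ?_
  ext y
  simp only [InnerProductSpace.toDual_apply_apply, ContinuousLinearMap.smul_apply,
    ContinuousLinearMap.coe_smul', Pi.smul_apply, ContinuousLinearMap.coe_comp',
    Function.comp_apply, ContinuousLinearMap.coe_id', id_eq, innerSL_apply_apply,
    real_inner_smul_left, hs, smul_eq_mul]
  field_simp
  ring

set_option maxHeartbeats 1000000 in
theorem mp_log_gradient_bound_far (m : ℝ) (hm : 0 < m)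
    (x : EuclideanSpace ℝ (Fin 3)) (hx : 3 ≤ ‖x‖) :
    ‖gradient
        (fun y : EuclideanSpace ℝ (Fin 3) =>
          1 + m / ‖y - EuclideanSpace.single (2 : Fin 3) (1 : ℝ)‖
            + m / ‖y - EuclideanSpace.single (2 : Fin 3) (-1 : ℝ)‖) x‖ /
      (2 * (1 + m / ‖x - EuclideanSpace.single (2 : Fin 3) (1 : ℝ)‖
              + m / ‖x - EuclideanSpace.single (2 : Fin 3) (-1 : ℝ)‖) ^ 2)
      ≤ 3 * m / (4 * ‖x‖) := by
  set p₁ : EuclideanSpace ℝ (Fin 3) := EuclideanSpace.single (2 : Fin 3) (1 : ℝ) with hp₁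
  set p₂ : EuclideanSpace ℝ (Fin 3) := EuclideanSpace.single (2 : Fin 3) (-1 : ℝ) with hp₂
  have hnp₁ : ‖p₁‖ = 1 := by rw [hp₁, EuclideanSpace.norm_single]; norm_num
  have hnp₂ : ‖p₂‖ = 1 := by rw [hp₂, EuclideanSpace.norm_single]; norm_num
  have hr₁ : ‖x‖ - 1 ≤ ‖x - p₁‖ := by
    have := norm_sub_norm_le x p₁; rw [hnp₁] at this; linarith
  have hr₂ : ‖x‖ - 1 ≤ ‖x - p₂‖ := by
    have := norm_sub_norm_le x p₂; rw [hnp₂] at this; linarith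
  have hx1 : x ≠ p₁ := by
    intro h; rw [h, hnp₁] at hx; linarith
  have hx2 : x ≠ p₂ := by
    intro h; rw [h, hnp₂] at hx; linarith
  set a := ‖x - p₁‖ with hadef
  set b := ‖x - p₂‖ with hbdef
  have ha : (2:ℝ) ≤ a := by linarith
  have hb : (2:ℝ) ≤ b := by linarith
  have ha0 : (0:ℝ) < a := by linarith
  have hb0 : (0:ℝ) < b := by linarith
  have g₁ := hasGradientAt_inv_norm_sub p₁ x hx1
  have g₂ := hasGradientAt_inv_norm_sub p₂ x hx2
  set v₁ : EuclideanSpace ℝ (Fin 3) := (-(a ^ 3)⁻¹) • (x - p₁) with hv₁def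
  set v₂ : EuclideanSpace ℝ (Fin 3) := (-(b ^ 3)⁻¹) • (x - p₂) with hv₂def
  have hF : HasFDerivAt
      (fun y : EuclideanSpace ℝ (Fin 3) => 1 + m * ‖y - p₁‖⁻¹ + m * ‖y - p₂‖⁻¹)
      (0 + m • (InnerProductSpace.toDual ℝ (EuclideanSpace ℝ (Fin 3)) v₁)
         + m • (InnerProductSpace.toDual ℝ (EuclideanSpace ℝ (Fin 3)) v₂)) x :=
    ((hasFDerivAt_const (1:ℝ) x).add (g₁.hasFDerivAt.const_mul m)).add
      (g₂.hasFDerivAt.const_mul m)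
  have hG : HasGradientAt
      (fun y : EuclideanSpace ℝ (Fin 3) => 1 + m / ‖y - p₁‖ + m / ‖y - p₂‖)
      (m • v₁ + m • v₂) x := by
    rw [hasGradientAt_iff_hasFDerivAt]
    have heq : (fun y : EuclideanSpace ℝ (Fin 3) =>
        1 + m / ‖y - p₁‖ + m / ‖y - p₂‖) =
        fun y => 1 + m * ‖y - p₁‖⁻¹ + m * ‖y - p₂‖⁻¹ := by
      funext y; rw [div_eq_mul_inv, div_eq_mul_inv]
    rw [heq]
    exact hF.congr_fderiv (by simp only [map_add, map_smul, zero_add])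
  rw [hG.gradient]
  have hv₁ : ‖v₁‖ = a⁻¹ ^ 2 := by
    rw [hv₁def, norm_smul, Real.norm_eq_abs, abs_neg, abs_inv, abs_pow,
      abs_of_pos ha0, ← hadef]
    field_simp
  have hv₂ : ‖v₂‖ = b⁻¹ ^ 2 := by
    rw [hv₂def, norm_smul, Real.norm_eq_abs, abs_neg, abs_inv, abs_pow,
      abs_of_pos hb0, ← hbdef]
    field_simp
  have hN : ‖m • v₁ + m • v₂‖ ≤ m / a ^ 2 + m / b ^ 2 := by
    calc ‖m • v₁ + m • v₂‖ ≤ ‖m • v₁‖ + ‖m • v₂‖ := norm_add_le _ _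
    _ = m / a ^ 2 + m / b ^ 2 := by
        rw [norm_smul m v₁, norm_smul m v₂, hv₁, hv₂, Real.norm_eq_abs,
          abs_of_pos hm, inv_pow, inv_pow, div_eq_mul_inv, div_eq_mul_inv]
  have hD : (2:ℝ) ≤ 2 * (1 + m / a + m / b) ^ 2 := by
    have h1 : (0:ℝ) < m / a + m / b := by positivity
    nlinarith
  have h0 : (0:ℝ) < ‖x‖ - 1 := by linarith
  calc ‖m • v₁ + m • v₂‖ / (2 * (1 + m / a + m / b) ^ 2)
      ≤ (m / a ^ 2 + m / b ^ 2) / 2 := by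
        gcongr
    _ ≤ (m / (‖x‖ - 1) ^ 2 + m / (‖x‖ - 1) ^ 2) / 2 := by
        gcongr
    _ = m / (‖x‖ - 1) ^ 2 := by ring
    _ ≤ 3 * m / (4 * ‖x‖) := by
        rw [div_le_div_iff₀ (by positivity) (by linarith)]
        nlinarith [mul_nonneg (mul_nonneg hm.le (by linarith : (0:ℝ) ≤ ‖x‖ - 3))
          (by linarith : (0:ℝ) ≤ 3 * ‖x‖ - 1)]
end
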